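/- In the group G = D_n × Z/2 with n = 2m even, the subgroup H_{1,3} generated by (x², 0), (y, 0), and (e, 1) is isomorphic to D_n if and only if m is odd. -/

import Mathlib

open DihedralGroup

/-- The nontrivial element of `Z/2`, written multiplicatively. -/
def z1 : Multiplicative (ZMod 2) := Multiplicative.ofAdd 1

namespace Stmt1Aux

theorem r_pow {n : ℕ} (i : ZMod n) (k : ℕ) : (r i) ^ k = r ((k : ZMod n) * i) := by
  induction k with
  | zero => simp [one_def, -r_zero]
  | succ k ih => rw [pow_succ, ih, r_mul_r]; congr 1; push_cast; ring

theorem r_inv {n : ℕ} (i : ZMod n) : (r i)⁻¹ = r (-i) := rfl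

theorem sr_inv {n : ℕ} (i : ZMod n) : (sr i)⁻¹ = sr i := rfl

/-- The explicit subgroup: first coordinate an "even" rotation/reflection, second arbitrary. -/
def K (n : ℕ) : Subgroup (DihedralGroup n × Multiplicative (ZMod 2)) where
  carrier := {g | ∃ a : ZMod n, g.1 = r (2 * a) ∨ g.1 = sr (2 * a)}
  one_mem' := ⟨0, Or.inl (by simp [one_def, -r_zero])⟩
  mul_mem' := by
    rintro ⟨g, u⟩ ⟨h, v⟩ ⟨a, ha | ha⟩ ⟨b, hb | hb⟩ <;> subst ha <;> subst hb <;>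
      rw [Set.mem_setOf_eq, Prod.mk_mul_mk]
    · exact ⟨a + b, Or.inl (by rw [r_mul_r]; ring_nf)⟩
    · exact ⟨b - a, Or.inr (by rw [r_mul_sr]; ring_nf)⟩
    · exact ⟨a + b, Or.inr (by rw [sr_mul_r]; ring_nf)⟩
    · exact ⟨b - a, Or.inl (by rw [sr_mul_sr]; ring_nf)⟩
  inv_mem' := by
    rintro ⟨g, u⟩ ⟨a, ha | ha⟩ <;> subst ha <;> rw [Set.mem_setOf_eq, Prod.fst_inv]
    · exact ⟨-a, Or.inl (by rw [r_inv]; ring_nf)⟩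
    · exact ⟨a, Or.inr (by rw [sr_inv])⟩

theorem mem_K {n : ℕ} (g : DihedralGroup n × Multiplicative (ZMod 2)) :
    g ∈ K n ↔ ∃ a : ZMod n, g.1 = r (2 * a) ∨ g.1 = sr (2 * a) := Iff.rfl

theorem ofAdd_mem (n : ℕ) (b : ZMod 2) :
    ((1, Multiplicative.ofAdd b) : DihedralGroup n × Multiplicative (ZMod 2)) ∈
      Subgroup.closure ({(r 2, 1), (sr 0, 1), (1, z1)} :
        Set (DihedralGroup n × Multiplicative (ZMod 2))) := by
  have h1 : ((1, z1) : DihedralGroup n × Multiplicative (ZMod 2)) ∈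
      Subgroup.closure ({(r 2, 1), (sr 0, 1), (1, z1)} :
        Set (DihedralGroup n × Multiplicative (ZMod 2))) :=
    Subgroup.subset_closure (by simp)
  have h2 := pow_mem h1 b.val
  convert h2 using 1
  rw [Prod.pow_mk, one_pow]
  refine Prod.ext rfl ?_
  show Multiplicative.ofAdd b = z1 ^ b.val
  rw [z1, ← ofAdd_nsmul]
  congr 1
  simp [nsmul_eq_mul, ZMod.natCast_val, ZMod.cast_id]

theorem r_mem (n : ℕ) [NeZero n] (a : ZMod n) :
    ((r (2 * a), 1) : DihedralGroup n × Multiplicative (ZMod 2)) ∈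
      Subgroup.closure ({(r 2, 1), (sr 0, 1), (1, z1)} :
        Set (DihedralGroup n × Multiplicative (ZMod 2))) := by
  have h2 : ((r 2, 1) : DihedralGroup n × Multiplicative (ZMod 2)) ∈
      Subgroup.closure ({(r 2, 1), (sr 0, 1), (1, z1)} :
        Set (DihedralGroup n × Multiplicative (ZMod 2))) :=
    Subgroup.subset_closure (by simp)
  have h3 := pow_mem h2 a.val
  convert h3 using 1
  rw [Prod.pow_mk, one_pow]
  refine Prod.ext ?_ rfl
  show r (2 * a) = (r 2) ^ a.val
  rw [r_pow]
  congr 1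
  rw [ZMod.natCast_val, ZMod.cast_id]
  ring

theorem closure_eq_K (n : ℕ) [NeZero n] :
    Subgroup.closure ({(r 2, 1), (sr 0, 1), (1, z1)} :
        Set (DihedralGroup n × Multiplicative (ZMod 2))) = K n := by
  apply le_antisymm
  · rw [Subgroup.closure_le]
    rintro g (rfl | rfl | rfl)
    · exact ⟨1, Or.inl (by norm_num)⟩
    · exact ⟨0, Or.inr (by norm_num)⟩
    · exact ⟨0, Or.inl (by rw [mul_zero]; exact one_def)⟩
  · rintro ⟨g, ε⟩ ⟨a, ha | ha⟩ <;> subst ha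
    · have := mul_mem (r_mem n a) (ofAdd_mem n (Multiplicative.toAdd ε))
      simpa using this
    · have key := mul_mem (r_mem n a) (ofAdd_mem n (Multiplicative.toAdd ε))
      have hs : ((sr 0, 1) : DihedralGroup n × Multiplicative (ZMod 2)) ∈
          Subgroup.closure ({(r 2, 1), (sr 0, 1), (1, z1)} :
            Set (DihedralGroup n × Multiplicative (ZMod 2))) :=
        Subgroup.subset_closure (by simp)
      have := mul_mem hs key
      simpa [zero_add] using this

theorem snd_pow_m {m : ℕ} (hme : Even m) (ε : Multiplicative (ZMod 2)) : ε ^ m = 1 := by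
  obtain ⟨k, hk⟩ := hme
  have h2 : ε ^ 2 = 1 := by
    rw [← ofAdd_toAdd ε, ← ofAdd_nsmul, two_nsmul, CharTwo.add_self_eq_zero]
    rfl
  calc ε ^ m = (ε ^ 2) ^ k := by rw [← pow_mul]; congr 1; omega
  _ = 1 := by rw [h2, one_pow]

theorem pow_m_eq_one {m n : ℕ} (hn : n = 2 * m) (hme : Even m)
    (g : DihedralGroup n × Multiplicative (ZMod 2)) (hg : g ∈ K n) : g ^ m = 1 := by
  obtain ⟨d, ε⟩ := g
  obtain ⟨a, ha | ha⟩ := hg <;> subst ha <;> rw [Prod.pow_mk] <;>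
      refine Prod.ext ?_ (snd_pow_m hme ε)
  · show (r (2 * a)) ^ m = (1 : DihedralGroup n)
    rw [r_pow, one_def]
    congr 1
    have h0 : (((2 * m : ℕ) : ZMod n)) = 0 := by rw [← hn]; exact ZMod.natCast_self n
    push_cast at h0 ⊢
    linear_combination a * h0
  · show (sr (2 * a)) ^ m = (1 : DihedralGroup n)
    obtain ⟨k, hk⟩ := hme
    have hm2 : m = 2 * k := by omega
    rw [hm2, mul_comm, pow_mul, sq, sr_mul_self, one_pow]

theorem no_iso_of_even {m n : ℕ} (hm : 0 < m) (hn : n = 2 * m) (hme : Even m)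
    (f : (Subgroup.closure ({(r 2, 1), (sr 0, 1), (1, z1)} :
        Set (DihedralGroup n × Multiplicative (ZMod 2)))) ≃* DihedralGroup n) : False := by
  have hnz : NeZero n := ⟨by omega⟩
  set H := Subgroup.closure ({(r 2, 1), (sr 0, 1), (1, z1)} :
      Set (DihedralGroup n × Multiplicative (ZMod 2))) with hH
  set h : H := f.symm (r 1) with hh
  have hmem : (h : DihedralGroup n × Multiplicative (ZMod 2)) ∈ K n := by
    rw [← closure_eq_K]; exact h.2
  have h1 : ((h : DihedralGroup n × Multiplicative (ZMod 2))) ^ m = 1 :=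
    pow_m_eq_one hn hme _ hmem
  have h2 : h ^ m = 1 := by
    apply Subtype.ext
    rw [SubmonoidClass.coe_pow]
    exact h1
  have h3 : (r 1 : DihedralGroup n) ^ m = 1 := by
    have h4 : f (h ^ m) = f 1 := by rw [h2]
    rw [map_pow, map_one, hh, MulEquiv.apply_symm_apply] at h4
    exact h4
  rw [r_pow, mul_one, one_def] at h3
  have h4 : ((m : ℕ) : ZMod n) = 0 := r.inj h3
  rw [ZMod.natCast_eq_zero_iff] at h4
  have := Nat.le_of_dvd hm h4
  omega

/-- the reduction map `ZMod n → ZMod 2` (when `n = 2 * m`). -/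
def c {m n : ℕ} (hn : n = 2 * m) : ZMod n →+* ZMod 2 :=
  ZMod.castHom ⟨m, hn⟩ (ZMod 2)

/-- the embedding `D_n → D_n × Z/2` in the odd case. -/
def psiFun {m n : ℕ} (hn : n = 2 * m) :
    DihedralGroup n → DihedralGroup n × Multiplicative (ZMod 2)
  | r k => (r (2 * k), Multiplicative.ofAdd (c hn k))
  | sr k => (sr (2 * k), Multiplicative.ofAdd (c hn k))

theorem ofAdd_mul_ofAdd (x y : ZMod 2) :
    Multiplicative.ofAdd x * Multiplicative.ofAdd y = Multiplicative.ofAdd (x + y) := rfl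

def psi {m n : ℕ} (hn : n = 2 * m) :
    DihedralGroup n →* DihedralGroup n × Multiplicative (ZMod 2) where
  toFun := psiFun hn
  map_one' := by
    show psiFun hn (r 0) = 1
    simp only [psiFun, mul_zero, map_zero, ofAdd_zero]
    rfl
  map_mul' := by
    rintro (i | i) (j | j) <;>
      simp only [r_mul_r, r_mul_sr, sr_mul_r, sr_mul_sr, psiFun, Prod.mk_mul_mk,
        ofAdd_mul_ofAdd, Prod.mk.injEq] <;>
      refine ⟨by congr 1; ring, ?_⟩ <;>
      congr 1 <;>
      simp only [map_add, map_sub, CharTwo.sub_eq_add] <;>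
      ring

theorem psi_apply_r {m n : ℕ} (hn : n = 2 * m) (k : ZMod n) :
    psi hn (r k) = (r (2 * k), Multiplicative.ofAdd (c hn k)) := rfl

theorem psi_apply_sr {m n : ℕ} (hn : n = 2 * m) (k : ZMod n) :
    psi hn (sr k) = (sr (2 * k), Multiplicative.ofAdd (c hn k)) := rfl

theorem psi_inj {m n : ℕ} (hm : Odd m) (hmp : 0 < m) (hn : n = 2 * m) :
    Function.Injective (psi hn) := by
  have hnz : NeZero n := ⟨by omega⟩
  rw [injective_iff_map_eq_one]
  rintro (k | k) hk
  · rw [psi_apply_r] at hk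
    have h1 : (2 * k : ZMod n) = 0 := by
      have := congrArg Prod.fst hk
      exact r.inj this
    have h2 : c hn k = 0 := by
      have := congrArg Prod.snd hk
      simpa using congrArg Multiplicative.toAdd this
    have hmdvd : m ∣ k.val := by
      have hv : n ∣ 2 * k.val := by
        rw [← ZMod.natCast_eq_zero_iff]
        push_cast
        rw [ZMod.natCast_zmod_val]
        exact h1
      obtain ⟨t, ht⟩ := hv
      exact ⟨t, Nat.eq_of_mul_eq_mul_left two_pos (by rw [ht, hn]; ring)⟩
    have h2dvd : 2 ∣ k.val := by
      rw [← ZMod.natCast_eq_zero_iff]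
      rw [c, ZMod.castHom_apply, ← ZMod.natCast_val] at h2
      exact h2
    have hdvd : 2 * m ∣ k.val :=
      Nat.Coprime.mul_dvd_of_dvd_of_dvd (Nat.coprime_two_left.mpr hm) h2dvd hmdvd
    have hlt : k.val < n := ZMod.val_lt k
    have hval0 : k.val = 0 := Nat.eq_zero_of_dvd_of_lt hdvd (by omega)
    have hk0 : k = 0 := by
      rw [← ZMod.natCast_zmod_val k, hval0, Nat.cast_zero]
    rw [hk0]
    rfl
  · exact absurd (congrArg Prod.fst hk) (by simp [psi_apply_sr, one_def, -r_zero])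

theorem psi_range {m n : ℕ} (hm : Odd m) (hmp : 0 < m) (hn : n = 2 * m) :
    (psi hn).range = K n := by
  have hnz : NeZero n := ⟨by omega⟩
  apply le_antisymm
  · rintro g ⟨(k | k), rfl⟩
    · exact ⟨k, Or.inl rfl⟩
    · exact ⟨k, Or.inr rfl⟩
  · have hm2 : ((m : ℕ) : ZMod 2) = 1 := by
      obtain ⟨t, ht⟩ := hm
      subst ht
      push_cast
      have h20 : (2 : ZMod 2) = 0 := rfl
      rw [h20]
      ring
    have key : ∀ (a : ZMod n) (ε : Multiplicative (ZMod 2)), ∃ k : ZMod n,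
        2 * k = 2 * a ∧ Multiplicative.ofAdd (c hn k) = ε := by
      intro a ε
      set δ : ZMod 2 := Multiplicative.toAdd ε - c hn a with hδ
      refine ⟨a + ((m * δ.val : ℕ) : ZMod n), ?_, ?_⟩
      · have h0 : ((2 * m : ℕ) : ZMod n) = 0 := by rw [← hn]; exact ZMod.natCast_self n
        push_cast
        push_cast at h0
        linear_combination (δ.val : ZMod n) * h0
      · have hck : c hn (a + ((m * δ.val : ℕ) : ZMod n)) = Multiplicative.toAdd ε := by
          rw [map_add, map_natCast]
          push_cast
          rw [hm2, one_mul, ZMod.natCast_zmod_val δ, hδ]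
          ring
        rw [hck, ofAdd_toAdd]
    rintro ⟨g, ε⟩ ⟨a, ha | ha⟩ <;> subst ha
    · obtain ⟨k, h2k, hck⟩ := key a ε
      exact ⟨r k, by rw [psi_apply_r, h2k, hck]⟩
    · obtain ⟨k, h2k, hck⟩ := key a ε
      exact ⟨sr k, by rw [psi_apply_sr, h2k, hck]⟩

theorem iso_of_odd {m n : ℕ} (hm : Odd m) (hmp : 0 < m) (hn : n = 2 * m) :
    Nonempty
      ((Subgroup.closure
          ({((r 2, 1)), ((sr 0, 1)), ((1, z1))} :
            Set (DihedralGroup n × Multiplicative (ZMod 2)))) ≃*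
        DihedralGroup n) := by
  have hnz : NeZero n := ⟨by omega⟩
  have e1 : (Subgroup.closure
      ({((r 2, 1)), ((sr 0, 1)), ((1, z1))} :
        Set (DihedralGroup n × Multiplicative (ZMod 2)))) = (psi hn).range := by
    rw [closure_eq_K n, psi_range hm hmp hn]
  exact ⟨(MulEquiv.subgroupCongr e1).trans
    (MonoidHom.ofInjective (psi_inj hm hmp hn)).symm⟩

end Stmt1Aux

/-- In `G = D_n × Z/2` with `n = 2m` even, the subgroup `H_{1,3}`
generated by `(x²,0)`, `(y,0)`, `(e,1)` is isomorphic to `D_n` iff `m` is odd. -/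
theorem stmt1 (m n : ℕ) (hm : 0 < m) (hn : n = 2 * m) :
    Nonempty
      ((Subgroup.closure
          ({((r 2, 1)), ((sr 0, 1)), ((1, z1))} :
            Set (DihedralGroup n × Multiplicative (ZMod 2)))) ≃*
        DihedralGroup n) ↔ Odd m := by
  constructor
  · rintro ⟨f⟩
    by_contra h
    rw [Nat.not_odd_iff_even] at h
    exact Stmt1Aux.no_iso_of_even hm hn h f
  · intro h
    exact Stmt1Aux.iso_of_odd h hm hn
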